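/- For a finite cell-independent relation U over schema {A, ?B} where attribute A is certain and ?B is uncertain, the probability that a random sample of U satisfies the functional dependency A → B equals the product over all values a in the active domain of A of the sum over all values b of the product, over tuples i with U[i][A] = a, of the probability that the distribution U[i][?B] takes value b. -/
import Mathlib


/-- For a CIR `U` over schema `{A, ?B}` (attribute `A` certain with values
`Aval i`, attribute `?B` uncertain with cell distribution `p i`), the probability that a random
sample satisfies the FD `A → B` equals the product, over all values `a` in the active domain of
`A`, of the sum over all values `b` of `p(a,b) = ∏_{i : Aval i = a} Pr_{U[i][?B]}(b)`. -/
theorem stmt0 {ι V : Type} [Fintype ι] [Fintype V] [DecidableEq ι] [DecidableEq V]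
    (Aval : ι → V) (p : ι → V → ℝ)
    (hnn : ∀ i b, 0 ≤ p i b) (hsum : ∀ i, ∑ b : V, p i b = 1) :
    ∑ r ∈ Finset.univ.filter
        (fun r : ι → V => ∀ i j : ι, Aval i = Aval j → r i = r j),
        ∏ i : ι, p i (r i)
      = ∏ a ∈ Finset.univ.image Aval,
          ∑ b : V, ∏ i ∈ Finset.univ.filter (fun i => Aval i = a), p i b := by
  classical
  set S := Finset.univ.image Aval with hS
  have hmem : ∀ i : ι, Aval i ∈ S := fun i => Finset.mem_image_of_mem _ (Finset.mem_univ i)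
  -- witness for each a ∈ S
  have hwit : ∀ a : {x // x ∈ S}, ∃ i, Aval i = a.1 := by
    intro a
    obtain ⟨i, _, hi⟩ := Finset.mem_image.mp a.2
    exact ⟨i, hi⟩
  choose wit hwitA using hwit
  -- RHS rewrite
  have key : ∀ g : {a // a ∈ S} → V,
      ∏ a : {a // a ∈ S}, ∏ i ∈ Finset.univ.filter (fun i => Aval i = a.1), p i (g a)
      = ∏ i : ι, p i (g ⟨Aval i, hmem i⟩) := by
    intro g
    rw [← Finset.prod_fiberwise_of_maps_to (t := Finset.univ)
      (g := fun i : ι => (⟨Aval i, hmem i⟩ : {a // a ∈ S}))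
      (fun i _ => Finset.mem_univ _) (fun i => p i (g ⟨Aval i, hmem i⟩))]
    apply Finset.prod_congr rfl
    intro a _
    apply Finset.prod_congr
    · apply Finset.filter_congr
      intro i _
      simp [Subtype.ext_iff]
    · intro i hi
      simp only [Finset.mem_filter] at hi
      exact congrArg (fun x => p i (g x)) hi.2.symm
  have hRHS : (∏ a ∈ S, ∑ b : V, ∏ i ∈ Finset.univ.filter (fun i => Aval i = a), p i b)
      = ∑ g ∈ Fintype.piFinset (fun _ : {a // a ∈ S} => (Finset.univ : Finset V)),
          ∏ i : ι, p i (g ⟨Aval i, hmem i⟩) := by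
    rw [← Finset.prod_coe_sort S, Finset.prod_univ_sum]
    exact Finset.sum_congr rfl fun g _ => key g
  rw [hRHS]
  -- bijection
  refine (Finset.sum_bij' (fun g _ => fun i => g ⟨Aval i, hmem i⟩)
    (fun r _ => fun a => r (wit a)) ?_ ?_ ?_ ?_ ?_).symm
  · intro g _
    simp only [Finset.mem_filter, Finset.mem_univ, true_and]
    intro i j hij
    congr 1
    exact Subtype.ext hij
  · intro r _
    exact Fintype.mem_piFinset.mpr fun a => Finset.mem_univ _
  · intro g _
    funext a
    exact congrArg g (Subtype.ext (hwitA a))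
  · intro r hr
    simp only [Finset.mem_filter, Finset.mem_univ, true_and] at hr
    funext i
    exact hr _ _ (hwitA ⟨Aval i, hmem i⟩)
  · intro g _
    rfl
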